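/- Let n₁, …, n_s ≥ 1 be integers with p = n₁ + ⋯ + n_s, let M = diag(N_{n₁}, …, N_{n_s}) be the p×p block-diagonal matrix of nilpotent Jordan blocks (ones on each block's superdiagonal), and set n_max := max_ℓ n_ℓ. Let λ ∈ ℂ, m ≥ 1 an integer, and R a p×p real matrix with nonnegative entries. Define β_i^{(k)} for 0 ≤ i ≤ n_max−1 by β_0^{(0)} := λ, β_1^{(0)} := 1 (when n_max ≥ 2), β_i^{(0)} := 0 for i ≥ 2, and β_0^{(k+1)} := (λ+k+1)·β_0^{(k)}, β_i^{(k+1)} := (λ+k+1)·β_i^{(k)} + β_{i−1}^{(k)} for i ≥ 1; let C_k := ∑_{i=0}^{n_max−1} β_i^{(k)}·M^i. Let rr be the 1×p row vector with rr_j := max_i R_{ij} and 1_p the all-ones column vector. For each ℓ and k, let R^{(ℓ)} be the columns of R in block ℓ, rc^{(ℓ)} ∈ ℝ^p with rc^{(ℓ)}_i := max_j (R^{(ℓ)})_{ij}, w^{(k,ℓ)} the 1×n_ℓ row vector whose j-th entry is ∑_{i=0}^{j−1}|β_i^{(k)}|, and 𝖰_k := [rc^{(1)}·w^{(k,1)},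 …, rc^{(s)}·w^{(k,s)}]. Define 𝖱₀ := R and 𝖱_{k+1} := 𝖰_k + |λ+k+1|·𝖱_k + M·𝖱_k + (1_p·rr)·𝖱_k for k = 0, …, m−2. Then for any p×p complex matrices B₀, …, B_{m−1} with |B_i − ((λ+i)·I_p + M)| ≤ R entrywise for all i, one has | B_{m−1}·B_{m−2}·⋯·B₀ − C_{m−1} | ≤ 𝖱_{m−1} entrywise. -/

import Mathlib

/-- The block-diagonal matrix of nilpotent Jordan blocks (real version):
entry 1 exactly at the superdiagonal positions within each block. -/
def jordanDiagR {s : ℕ} (n : Fin s → ℕ) :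
    Matrix ((ℓ : Fin s) × Fin (n ℓ)) ((ℓ : Fin s) × Fin (n ℓ)) ℝ :=
  Matrix.of fun a b => if a.1 = b.1 ∧ (b.2 : ℕ) = (a.2 : ℕ) + 1 then 1 else 0

/-- The block-diagonal matrix of nilpotent Jordan blocks (complex version). -/
def jordanDiagC {s : ℕ} (n : Fin s → ℕ) :
    Matrix ((ℓ : Fin s) × Fin (n ℓ)) ((ℓ : Fin s) × Fin (n ℓ)) ℂ :=
  Matrix.of fun a b => if a.1 = b.1 ∧ (b.2 : ℕ) = (a.2 : ℕ) + 1 then 1 else 0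

/-- `beta lam k i` is the coefficient β_i^{(k)}: β_0^{(0)} = λ, β_1^{(0)} = 1,
β_i^{(0)} = 0 for i ≥ 2, and β_0^{(k+1)} = (λ+k+1)β_0^{(k)},
β_i^{(k+1)} = (λ+k+1)β_i^{(k)} + β_{i−1}^{(k)} for i ≥ 1. -/
noncomputable def beta (lam : ℂ) : ℕ → ℕ → ℂ
  | 0 => fun i => if i = 0 then lam else if i = 1 then 1 else 0
  | (k + 1) => fun i =>
      (lam + k + 1) * beta lam k i + if i = 0 then 0 else beta lam k (i - 1)

/-- The matrix `𝖰_k = [rc^{(1)}·w^{(k,1)}, …, rc^{(s)}·w^{(k,s)}]`, where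
`rc^{(ℓ)}_i = max_j R_{i,(ℓ,j)}` and the `j`-th entry of `w^{(k,ℓ)}` is
`∑_{t=0}^{j} |β_t^{(k)}|`. -/
noncomputable def Qmat {s : ℕ} (n : Fin s → ℕ) (lam : ℂ)
    (R : Matrix ((ℓ : Fin s) × Fin (n ℓ)) ((ℓ : Fin s) × Fin (n ℓ)) ℝ) (k : ℕ) :
    Matrix ((ℓ : Fin s) × Fin (n ℓ)) ((ℓ : Fin s) × Fin (n ℓ)) ℝ :=
  Matrix.of fun i j => (⨆ a : Fin (n j.1), R i ⟨j.1, a⟩) *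
    ∑ t ∈ Finset.range ((j.2 : ℕ) + 1), ‖beta lam k t‖

/-- The matrix `1_p · rr`, where `rr_j = max_i R_{ij}`. -/
noncomputable def colMaxMat {ι : Type*} [Fintype ι] (R : Matrix ι ι ℝ) : Matrix ι ι ℝ :=
  Matrix.of fun _ j => ⨆ i, R i j

/-- The radius sequence 𝖱₀ := R,
`𝖱_{k+1} := 𝖰_k + |λ+k+1|·𝖱_k + M·𝖱_k + (1_p·rr)·𝖱_k`. -/
noncomputable def RseqJ {s : ℕ} (n : Fin s → ℕ) (lam : ℂ)
    (R : Matrix ((ℓ : Fin s) × Fin (n ℓ)) ((ℓ : Fin s) × Fin (n ℓ)) ℝ) :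
    ℕ → Matrix ((ℓ : Fin s) × Fin (n ℓ)) ((ℓ : Fin s) × Fin (n ℓ)) ℝ
  | 0 => R
  | (k + 1) => Qmat n lam R k + ‖lam + k + 1‖ • RseqJ n lam R k +
      jordanDiagR n * RseqJ n lam R k + colMaxMat R * RseqJ n lam R k

section Aux

variable {s : ℕ} {n : Fin s → ℕ}

lemma idx_ext {a b : (ℓ : Fin s) × Fin (n ℓ)} (h1 : a.1 = b.1)
    (h2 : (a.2 : ℕ) = (b.2 : ℕ)) : a = b := by
  rcases a with ⟨l, i⟩; rcases b with ⟨l', j⟩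
  dsimp at h1 h2
  subst h1
  exact congrArg _ (Fin.ext h2)

lemma jordanC_pow_apply (t : ℕ) (a b : (ℓ : Fin s) × Fin (n ℓ)) :
    (jordanDiagC n ^ t) a b = if a.1 = b.1 ∧ (b.2 : ℕ) = (a.2 : ℕ) + t then 1 else 0 := by
  induction t generalizing a b with
  | zero =>
    rw [pow_zero, Matrix.one_apply]
    by_cases h : a = b
    · subst h; simp
    · rw [if_neg h, if_neg]
      rintro ⟨h1, h2⟩
      exact h (idx_ext h1 (by omega))
  | succ t ih =>
    rw [pow_succ, Matrix.mul_apply]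
    by_cases h : a.1 = b.1 ∧ (b.2 : ℕ) = (a.2 : ℕ) + (t + 1)
    · obtain ⟨h1, h2⟩ := h
      have hb : (b.2 : ℕ) < n a.1 := by rw [h1]; exact b.2.isLt
      have hlt : (a.2 : ℕ) + t < n a.1 := by omega
      rw [Finset.sum_eq_single_of_mem
        (⟨a.1, ⟨(a.2 : ℕ) + t, hlt⟩⟩ : (ℓ : Fin s) × Fin (n ℓ)) (Finset.mem_univ _)]
      · rw [ih, jordanDiagC, Matrix.of_apply, if_pos ⟨rfl, rfl⟩, one_mul,
          if_pos (⟨h1, by omega⟩ : (⟨a.1, ⟨(a.2 : ℕ) + t, hlt⟩⟩ :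
            (ℓ : Fin s) × Fin (n ℓ)).1 = b.1 ∧ (b.2 : ℕ) = (a.2 : ℕ) + t + 1),
          if_pos ⟨h1, h2⟩]
      · intro c _ hc
        rw [ih]
        rcases eq_or_ne a.1 c.1 with h3 | h3
        · rcases eq_or_ne ((c.2 : ℕ)) ((a.2 : ℕ) + t) with h4 | h4
          · exact absurd (show c = (⟨a.1, ⟨(a.2 : ℕ) + t, hlt⟩⟩ : (ℓ : Fin s) × Fin (n ℓ)) from
              idx_ext h3.symm h4) hc
          · rw [if_neg, zero_mul]
            rintro ⟨_, h5⟩; exact h4 h5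
        · rw [if_neg, zero_mul]
          rintro ⟨h5, _⟩; exact h3 h5
    · rw [if_neg h]
      apply Finset.sum_eq_zero
      intro c _
      rw [ih]
      rcases eq_or_ne a.1 c.1 with h3 | h3
      · rcases eq_or_ne ((c.2 : ℕ)) ((a.2 : ℕ) + t) with h4 | h4
        · rw [if_pos ⟨h3, h4⟩, one_mul, jordanDiagC, Matrix.of_apply, if_neg]
          rintro ⟨h5, h6⟩
          exact h ⟨h3.trans h5, by omega⟩
        · rw [if_neg, zero_mul]; rintro ⟨_, h5⟩; exact h4 h5
      · rw [if_neg, zero_mul]; rintro ⟨h5, _⟩; exact h3 h5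

noncomputable def Csum {s : ℕ} (n : Fin s → ℕ) (lam : ℂ) (k : ℕ) :
    Matrix ((ℓ : Fin s) × Fin (n ℓ)) ((ℓ : Fin s) × Fin (n ℓ)) ℂ :=
  ∑ i ∈ Finset.range (Finset.univ.sup n), beta lam k i • jordanDiagC n ^ i

lemma Csum_apply (lam : ℂ) (k : ℕ) (a b : (ℓ : Fin s) × Fin (n ℓ)) :
    Csum n lam k a b =
      if a.1 = b.1 ∧ (a.2 : ℕ) ≤ (b.2 : ℕ) then beta lam k ((b.2 : ℕ) - (a.2 : ℕ)) else 0 := by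
  rw [Csum, Matrix.sum_apply]
  simp only [Matrix.smul_apply, jordanC_pow_apply, smul_eq_mul]
  by_cases h : a.1 = b.1 ∧ (a.2 : ℕ) ≤ (b.2 : ℕ)
  · obtain ⟨h1, h2⟩ := h
    have hb : (b.2 : ℕ) < n b.1 := b.2.isLt
    have hsup : n b.1 ≤ Finset.univ.sup n := Finset.le_sup (Finset.mem_univ b.1)
    rw [Finset.sum_eq_single_of_mem ((b.2 : ℕ) - (a.2 : ℕ))
      (Finset.mem_range.2 (by omega))]
    · rw [if_pos ⟨h1, by omega⟩, mul_one, if_pos ⟨h1, h2⟩]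
    · intro i _ hi
      rw [if_neg, mul_zero]
      rintro ⟨_, h5⟩; exact hi (by omega)
  · rw [if_neg h]
    apply Finset.sum_eq_zero
    intro i _
    rw [if_neg, mul_zero]
    rintro ⟨h5, h6⟩
    exact h ⟨h5, by omega⟩

end Aux

section Aux2
variable {s : ℕ} {n : Fin s → ℕ}

lemma jordan_mul_apply (X : Matrix ((ℓ : Fin s) × Fin (n ℓ)) ((ℓ : Fin s) × Fin (n ℓ)) ℂ)
    (a b : (ℓ : Fin s) × Fin (n ℓ)) :
    (jordanDiagC n * X) a b =
      if h : (a.2 : ℕ) + 1 < n a.1 then X ⟨a.1, ⟨(a.2 : ℕ) + 1, h⟩⟩ b else 0 := by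
  rw [Matrix.mul_apply]
  split
  · next h =>
    rw [Finset.sum_eq_single_of_mem (⟨a.1, ⟨(a.2 : ℕ) + 1, h⟩⟩ : (ℓ : Fin s) × Fin (n ℓ))
      (Finset.mem_univ _)]
    · rw [jordanDiagC, Matrix.of_apply, if_pos ⟨rfl, rfl⟩, one_mul]
    · intro c _ hc
      rw [jordanDiagC, Matrix.of_apply, if_neg, zero_mul]
      rintro ⟨h1, h2⟩
      exact hc (show c = (⟨a.1, ⟨(a.2 : ℕ) + 1, h⟩⟩ : (ℓ : Fin s) × Fin (n ℓ)) from
        idx_ext h1.symm h2)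
  · next h =>
    apply Finset.sum_eq_zero
    intro c _
    rw [jordanDiagC, Matrix.of_apply, if_neg, zero_mul]
    rintro ⟨h1, h2⟩
    have hc : (c.2 : ℕ) < n a.1 := by rw [h1]; exact c.2.isLt
    omega

lemma beta_succ (lam : ℂ) (k i : ℕ) :
    beta lam (k + 1) i =
      (lam + k + 1) * beta lam k i + if i = 0 then 0 else beta lam k (i - 1) := rfl

lemma beta_zero (lam : ℂ) (i : ℕ) :
    beta lam 0 i = if i = 0 then lam else if i = 1 then 1 else 0 := rfl

lemma Csum_succ (lam : ℂ) (k : ℕ) :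
    Csum n lam (k + 1) =
      ((lam + k + 1) • (1 : Matrix ((ℓ : Fin s) × Fin (n ℓ)) ((ℓ : Fin s) × Fin (n ℓ)) ℂ)
        + jordanDiagC n) * Csum n lam k := by
  ext a b
  rw [Matrix.add_mul, Matrix.add_apply, Matrix.smul_mul, Matrix.one_mul, Matrix.smul_apply,
    smul_eq_mul, jordan_mul_apply]
  simp only [Csum_apply]
  rw [beta_succ]
  by_cases hfst : a.1 = b.1
  · have hnn : n a.1 = n b.1 := by rw [hfst]
    have hb : (b.2 : ℕ) < n a.1 := by rw [hnn]; exact b.2.isLt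
    by_cases hle : (a.2 : ℕ) ≤ (b.2 : ℕ)
    · rw [if_pos (show a.1 = b.1 ∧ (a.2 : ℕ) ≤ (b.2 : ℕ) from ⟨hfst, hle⟩),
        if_pos (show a.1 = b.1 ∧ (a.2 : ℕ) ≤ (b.2 : ℕ) from ⟨hfst, hle⟩)]
      by_cases hd : (b.2 : ℕ) = (a.2 : ℕ)
      · rw [if_pos (show (b.2 : ℕ) - (a.2 : ℕ) = 0 by omega), add_zero]
        split
        · next hq =>
            rw [if_neg (show ¬ (a.1 = b.1 ∧ (a.2 : ℕ) + 1 ≤ (b.2 : ℕ)) from fun h => by omega),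
              add_zero]
        · rw [add_zero]
      · rw [if_neg (show ¬ ((b.2 : ℕ) - (a.2 : ℕ) = 0) by omega),
          dif_pos (show (a.2 : ℕ) + 1 < n a.1 by omega),
          if_pos (show a.1 = b.1 ∧ (a.2 : ℕ) + 1 ≤ (b.2 : ℕ) from ⟨hfst, by omega⟩),
          show (b.2 : ℕ) - (a.2 : ℕ) - 1 = (b.2 : ℕ) - ((a.2 : ℕ) + 1) from by omega]
    · rw [if_neg (fun h => hle h.2), if_neg (fun h => hle h.2), mul_zero, zero_add]
      split
      · next hq =>
          rw [if_neg (show ¬ (a.1 = b.1 ∧ (a.2 : ℕ) + 1 ≤ (b.2 : ℕ)) from fun h => by omega)]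
      · rfl
  · rw [if_neg (fun h => hfst h.1), if_neg (fun h => hfst h.1), mul_zero, zero_add]
    split
    · next hq => rw [if_neg (fun h => hfst h.1)]
    · rfl

lemma Csum_zero (lam : ℂ) :
    Csum n lam 0 = lam • (1 : Matrix ((ℓ : Fin s) × Fin (n ℓ)) ((ℓ : Fin s) × Fin (n ℓ)) ℂ)
      + jordanDiagC n := by
  ext a b
  rw [Csum_apply, Matrix.add_apply, Matrix.smul_apply, Matrix.one_apply, smul_eq_mul,
    jordanDiagC, Matrix.of_apply, beta_zero]
  by_cases hab : a = b
  · subst hab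
    rw [if_pos (rfl : a = a), mul_one,
      if_pos (show a.1 = a.1 ∧ (a.2 : ℕ) ≤ (a.2 : ℕ) from ⟨rfl, le_rfl⟩), Nat.sub_self,
      if_pos (rfl : (0 : ℕ) = 0),
      if_neg (show ¬ (a.1 = a.1 ∧ (a.2 : ℕ) = (a.2 : ℕ) + 1) from fun h => by omega), add_zero]
  · have hab' : ¬ (a.1 = b.1 ∧ (a.2 : ℕ) = (b.2 : ℕ)) := fun h => hab (idx_ext h.1 h.2)
    rw [if_neg hab, mul_zero, zero_add]
    by_cases hfst : a.1 = b.1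
    · by_cases hle : (a.2 : ℕ) ≤ (b.2 : ℕ)
      · rw [if_pos (show a.1 = b.1 ∧ (a.2 : ℕ) ≤ (b.2 : ℕ) from ⟨hfst, hle⟩),
          if_neg (show ¬ ((b.2 : ℕ) - (a.2 : ℕ) = 0) from fun h => hab' ⟨hfst, by omega⟩)]
        by_cases hd1 : (b.2 : ℕ) = (a.2 : ℕ) + 1
        · rw [if_pos (show (b.2 : ℕ) - (a.2 : ℕ) = 1 by omega),
            if_pos (show a.1 = b.1 ∧ (b.2 : ℕ) = (a.2 : ℕ) + 1 from ⟨hfst, hd1⟩)]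
        · rw [if_neg (show ¬ ((b.2 : ℕ) - (a.2 : ℕ) = 1) from fun h => hd1 (by omega)),
            if_neg (show ¬ (a.1 = b.1 ∧ (b.2 : ℕ) = (a.2 : ℕ) + 1) from fun h => hd1 h.2)]
      · rw [if_neg (fun h => hle h.2),
          if_neg (show ¬ (a.1 = b.1 ∧ (b.2 : ℕ) = (a.2 : ℕ) + 1) from fun h => by omega)]
    · rw [if_neg (fun h => hfst h.1), if_neg (fun h => hfst h.1)]


lemma abs_scalar_add_jordan (μ : ℂ) (a t : (ℓ : Fin s) × Fin (n ℓ)) :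
    ‖(μ • (1 : Matrix ((ℓ : Fin s) × Fin (n ℓ)) ((ℓ : Fin s) × Fin (n ℓ)) ℂ)
        + jordanDiagC n) a t‖
      = ‖μ‖ * (if a = t then 1 else 0) + jordanDiagR n a t := by
  rw [Matrix.add_apply, Matrix.smul_apply, Matrix.one_apply, smul_eq_mul, jordanDiagC,
    jordanDiagR, Matrix.of_apply, Matrix.of_apply]
  by_cases hat : a = t
  · subst hat
    rw [if_pos (rfl : a = a), mul_one]
    try rw [if_pos (rfl : a = a)]
    try rw [mul_one]
    rw [if_neg (show ¬ (a.1 = a.1 ∧ (a.2 : ℕ) = (a.2 : ℕ) + 1) from fun h => by omega)]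
    try rw [if_neg (show ¬ (a.1 = a.1 ∧ (a.2 : ℕ) = (a.2 : ℕ) + 1) from fun h => by omega)]
    rw [add_zero]
    try rw [add_zero]
  · rw [if_neg hat, if_neg hat, mul_zero, mul_zero, zero_add, zero_add]
    split_ifs with h
    · exact norm_one
    · exact norm_zero

def prodL {α : Type*} [Monoid α] (f : ℕ → α) : ℕ → α
  | 0 => 1
  | (k + 1) => f k * prodL f k

lemma prodL_eq {α : Type*} [Monoid α] (f : ℕ → α) (m : ℕ) :
    (List.ofFn (fun i : Fin m => f i)).reverse.prod = prodL f m := by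
  induction m with
  | zero => simp [prodL]
  | succ m ih =>
    rw [List.ofFn_succ']
    simp only [List.concat_eq_append, List.reverse_append, List.reverse_singleton,
      List.singleton_append, List.prod_cons, Fin.coe_castSucc, Fin.val_last, ih]
    rfl

end Aux2

section Aux3
variable {s : ℕ} {n : Fin s → ℕ}

lemma ciSup_nonneg_of {ι : Type*} [Fintype ι] [Nonempty ι] {f : ι → ℝ}
    (hf : ∀ i, 0 ≤ f i) : 0 ≤ ⨆ i, f i :=
  le_trans (hf (Classical.arbitrary ι)) (le_ciSup (Set.Finite.bddAbove (Set.finite_range f)) _)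

lemma RseqJ_nonneg (hs : 1 ≤ s) (hn : ∀ ℓ, 1 ≤ n ℓ) (lam : ℂ)
    (R : Matrix ((ℓ : Fin s) × Fin (n ℓ)) ((ℓ : Fin s) × Fin (n ℓ)) ℝ)
    (hR : ∀ i j, 0 ≤ R i j) :
    ∀ k a b, 0 ≤ RseqJ n lam R k a b := by
  have hne : Nonempty ((ℓ : Fin s) × Fin (n ℓ)) := ⟨⟨⟨0, hs⟩, ⟨0, hn _⟩⟩⟩
  intro k
  induction k with
  | zero => exact fun a b => by rw [RseqJ]; exact hR a b
  | succ k ih =>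
    intro a b
    show 0 ≤ (Qmat n lam R k + ‖lam + k + 1‖ • RseqJ n lam R k +
      jordanDiagR n * RseqJ n lam R k + colMaxMat R * RseqJ n lam R k) a b
    simp only [Matrix.add_apply, Matrix.smul_apply, smul_eq_mul, Matrix.mul_apply]
    have h1 : 0 ≤ Qmat n lam R k a b := by
      have : Nonempty (Fin (n b.1)) := ⟨⟨0, hn _⟩⟩
      exact mul_nonneg (ciSup_nonneg_of (fun i => hR a _))
        (Finset.sum_nonneg fun t _ => norm_nonneg _)
    have h2 : 0 ≤ ‖lam + k + 1‖ * RseqJ n lam R k a b :=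
      mul_nonneg (norm_nonneg _) (ih a b)
    have h3 : 0 ≤ ∑ c, jordanDiagR n a c * RseqJ n lam R k c b :=
      Finset.sum_nonneg fun c _ => mul_nonneg
        (by rw [jordanDiagR, Matrix.of_apply]; split_ifs <;> norm_num) (ih c b)
    have h4 : 0 ≤ ∑ c, colMaxMat R a c * RseqJ n lam R k c b :=
      Finset.sum_nonneg fun c _ => mul_nonneg
        (by rw [colMaxMat, Matrix.of_apply]; exact ciSup_nonneg_of (fun i => hR i c)) (ih c b)
    positivity

lemma sum_mul_absC_le (lam : ℂ) (k : ℕ)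
    (R : Matrix ((ℓ : Fin s) × Fin (n ℓ)) ((ℓ : Fin s) × Fin (n ℓ)) ℝ)
    (hR : ∀ i j, 0 ≤ R i j) (a b : (ℓ : Fin s) × Fin (n ℓ)) :
    ∑ t, R a t * ‖Csum n lam k t b‖ ≤ Qmat n lam R k a b := by
  have h1 : ∀ t : (ℓ : Fin s) × Fin (n ℓ), R a t * ‖Csum n lam k t b‖
      = if t.1 = b.1 ∧ (t.2 : ℕ) ≤ (b.2 : ℕ) then
          R a t * ‖beta lam k ((b.2 : ℕ) - (t.2 : ℕ))‖ else 0 := by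
    intro t
    rw [Csum_apply]
    split_ifs with h
    · rfl
    · rw [norm_zero, mul_zero]
  rw [Finset.sum_congr rfl (fun t _ => h1 t), ← Finset.univ_sigma_univ, Finset.sum_sigma]
  have h2 : ∀ ℓ ∈ (Finset.univ : Finset (Fin s)), ℓ ≠ b.1 →
      ∑ j : Fin (n ℓ), (if (⟨ℓ, j⟩ : (ℓ : Fin s) × Fin (n ℓ)).1 = b.1 ∧
        ((⟨ℓ, j⟩ : (ℓ : Fin s) × Fin (n ℓ)).2 : ℕ) ≤ (b.2 : ℕ) then
          R a ⟨ℓ, j⟩ * ‖beta lam k ((b.2 : ℕ) - ((⟨ℓ, j⟩ :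
            (ℓ : Fin s) × Fin (n ℓ)).2 : ℕ))‖ else 0) = 0 := by
    intro ℓ _ hℓ
    exact Finset.sum_eq_zero fun j _ => if_neg (fun h => hℓ h.1)
  rw [Finset.sum_eq_single_of_mem b.1 (Finset.mem_univ _) h2]
  simp only [eq_self_iff_true, true_and]
  set S := ⨆ i : Fin (n b.1), R a ⟨b.1, i⟩ with hS
  have hSnn : ∀ j : Fin (n b.1), R a ⟨b.1, j⟩ ≤ S := fun j =>
    le_ciSup (f := fun i : Fin (n b.1) => R a ⟨b.1, i⟩)
      (Set.Finite.bddAbove (Set.finite_range _)) j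
  calc ∑ j : Fin (n b.1), (if (j : ℕ) ≤ (b.2 : ℕ) then
          R a ⟨b.1, j⟩ * ‖beta lam k ((b.2 : ℕ) - (j : ℕ))‖ else 0)
      ≤ ∑ j : Fin (n b.1), (if (j : ℕ) ≤ (b.2 : ℕ) then
          S * ‖beta lam k ((b.2 : ℕ) - (j : ℕ))‖ else 0) := by
        apply Finset.sum_le_sum
        intro j _
        split_ifs with hA
        · exact mul_le_mul_of_nonneg_right (hSnn j) (norm_nonneg _)
        · exact le_refl 0
    _ = S * ∑ u ∈ Finset.range ((b.2 : ℕ) + 1), ‖beta lam k u‖ := by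
        have h3 : ∀ j : Fin (n b.1), (if (j : ℕ) ≤ (b.2 : ℕ) then
            S * ‖beta lam k ((b.2 : ℕ) - (j : ℕ))‖ else 0)
              = S * (if (j : ℕ) ≤ (b.2 : ℕ) then
                ‖beta lam k ((b.2 : ℕ) - (j : ℕ))‖ else 0) := by
          intro j
          split_ifs
          · rfl
          · rw [mul_zero]
        rw [Finset.sum_congr rfl (fun j _ => h3 j), ← Finset.mul_sum]
        congr 1
        rw [Fin.sum_univ_eq_sum_range
          (fun j => if j ≤ (b.2 : ℕ) then ‖beta lam k ((b.2 : ℕ) - j)‖ else 0)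
          (n b.1)]
        rw [← Finset.sum_subset (Finset.range_subset_range.2 (show (b.2 : ℕ) + 1 ≤ n b.1 from b.2.isLt))
          (by
            intro x _ hx
            rw [if_neg]
            simp only [Finset.mem_range] at hx
            omega)]
        have hrefl := Finset.sum_range_reflect (fun u => ‖beta lam k u‖) ((b.2 : ℕ) + 1)
        simp only [Nat.add_sub_cancel] at hrefl
        rw [← hrefl]
        apply Finset.sum_congr rfl
        intro j hj
        rw [if_pos (by simp only [Finset.mem_range] at hj; omega)]
    _ ≤ Qmat n lam R k a b := le_of_eq rfl

end Aux3

theorem stmt_15 {s : ℕ} (hs : 1 ≤ s) (n : Fin s → ℕ) (hn : ∀ ℓ, 1 ≤ n ℓ)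
    (lam : ℂ) (m : ℕ) (hm : 1 ≤ m)
    (R : Matrix ((ℓ : Fin s) × Fin (n ℓ)) ((ℓ : Fin s) × Fin (n ℓ)) ℝ)
    (hR : ∀ i j, 0 ≤ R i j)
    (B : Fin m → Matrix ((ℓ : Fin s) × Fin (n ℓ)) ((ℓ : Fin s) × Fin (n ℓ)) ℂ)
    (hB : ∀ i : Fin m, ∀ a b, ‖B i a b - ((lam + (i : ℕ)) • (1 : Matrix ((ℓ : Fin s) × Fin (n ℓ))
        ((ℓ : Fin s) × Fin (n ℓ)) ℂ) + jordanDiagC n) a b‖ ≤ R a b) :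
    ∀ a b, ‖((List.ofFn B).reverse.prod) a b -
          (∑ i ∈ Finset.range (Finset.univ.sup n),
            beta lam (m - 1) i • jordanDiagC n ^ i) a b‖ ≤
      RseqJ n lam R (m - 1) a b := by
  obtain ⟨mm, rfl⟩ : ∃ mm, m = mm + 1 := ⟨m - 1, by omega⟩
  simp only [Nat.add_sub_cancel]
  set B' : ℕ → Matrix ((ℓ : Fin s) × Fin (n ℓ)) ((ℓ : Fin s) × Fin (n ℓ)) ℂ :=
    fun i => if h : i < mm + 1 then B ⟨i, h⟩ else 1 with hB'def
  have hBB : ∀ i (h : i < mm + 1), B' i = B ⟨i, h⟩ := by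
    intro i h
    rw [hB'def]
    exact dif_pos h
  have hofn : List.ofFn B = List.ofFn (fun i : Fin (mm + 1) => B' (i : ℕ)) := by
    have : B = fun i : Fin (mm + 1) => B' (i : ℕ) := by
      funext i
      rw [hBB (i : ℕ) i.isLt, Fin.eta]
    rw [← this]
  rw [hofn, prodL_eq]
  have hjR : ∀ a t : (ℓ : Fin s) × Fin (n ℓ), 0 ≤ jordanDiagR n a t := by
    intro a t
    rw [jordanDiagR, Matrix.of_apply]
    split_ifs <;> norm_num
  have key : ∀ k, k < mm + 1 → ∀ a b,
      ‖prodL B' (k + 1) a b - Csum n lam k a b‖ ≤ RseqJ n lam R k a b := by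
    intro k
    induction k with
    | zero =>
      intro h0 a b
      have hP : prodL B' 1 = B ⟨0, h0⟩ := by
        show B' 0 * prodL B' 0 = _
        rw [show prodL B' 0 = 1 from rfl, mul_one, hBB 0 h0]
      rw [hP, Csum_zero]
      have := hB ⟨0, h0⟩ a b
      have h00 : ((⟨0, h0⟩ : Fin (mm + 1)) : ℕ) = 0 := rfl
      rw [h00, Nat.cast_zero, add_zero] at this
      exact this
    | succ k ih =>
      intro hk a b
      have hk' : k < mm + 1 := by omega
      specialize ih hk'
      have hAc : ∀ x y, ‖B' (k + 1) x y -
          ((lam + (k : ℂ) + 1) • (1 : Matrix ((ℓ : Fin s) × Fin (n ℓ))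
            ((ℓ : Fin s) × Fin (n ℓ)) ℂ) + jordanDiagC n) x y‖ ≤ R x y := by
        intro x y
        have := hB ⟨k + 1, hk⟩ x y
        have hc : (lam + ((((⟨k + 1, hk⟩ : Fin (mm + 1)) : ℕ)) : ℂ)) = lam + (k : ℂ) + 1 := by
          push_cast
          ring
        rw [hc] at this
        rw [hBB (k + 1) hk]
        exact this
      have hCs := Csum_succ (n := n) lam k
      rw [hCs, show prodL B' (k + 1 + 1) = B' (k + 1) * prodL B' (k + 1) from rfl,
        Matrix.mul_apply, Matrix.mul_apply, ← Finset.sum_sub_distrib]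
      have hterm : ∀ t : (ℓ : Fin s) × Fin (n ℓ),
          ‖B' (k + 1) a t * prodL B' (k + 1) t b -
            ((lam + (k : ℂ) + 1) • (1 : Matrix ((ℓ : Fin s) × Fin (n ℓ))
              ((ℓ : Fin s) × Fin (n ℓ)) ℂ) + jordanDiagC n) a t * Csum n lam k t b‖
          ≤ R a t * ‖Csum n lam k t b‖
            + (‖lam + (k : ℂ) + 1‖ * (if a = t then 1 else 0) + jordanDiagR n a t)
              * RseqJ n lam R k t b
            + R a t * RseqJ n lam R k t b := by
        intro t
        have hsplit : B' (k + 1) a t * prodL B' (k + 1) t b -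
            ((lam + (k : ℂ) + 1) • (1 : Matrix ((ℓ : Fin s) × Fin (n ℓ))
              ((ℓ : Fin s) × Fin (n ℓ)) ℂ) + jordanDiagC n) a t * Csum n lam k t b
            = (B' (k + 1) a t - ((lam + (k : ℂ) + 1) • (1 : Matrix ((ℓ : Fin s) × Fin (n ℓ))
                ((ℓ : Fin s) × Fin (n ℓ)) ℂ) + jordanDiagC n) a t) * Csum n lam k t b
              + ((lam + (k : ℂ) + 1) • (1 : Matrix ((ℓ : Fin s) × Fin (n ℓ))
                ((ℓ : Fin s) × Fin (n ℓ)) ℂ) + jordanDiagC n) a t *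
                  (prodL B' (k + 1) t b - Csum n lam k t b)
              + (B' (k + 1) a t - ((lam + (k : ℂ) + 1) • (1 : Matrix ((ℓ : Fin s) × Fin (n ℓ))
                ((ℓ : Fin s) × Fin (n ℓ)) ℂ) + jordanDiagC n) a t) *
                  (prodL B' (k + 1) t b - Csum n lam k t b) := by ring
        rw [hsplit]
        refine le_trans (norm_add_le _ _) ?_
        refine le_trans (add_le_add_left (norm_add_le _ _) _) ?_
        have h1 : ‖(B' (k + 1) a t - ((lam + (k : ℂ) + 1) •
            (1 : Matrix ((ℓ : Fin s) × Fin (n ℓ)) ((ℓ : Fin s) × Fin (n ℓ)) ℂ)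
              + jordanDiagC n) a t) * Csum n lam k t b‖
            ≤ R a t * ‖Csum n lam k t b‖ := by
          rw [norm_mul]
          exact mul_le_mul_of_nonneg_right (hAc a t) (norm_nonneg _)
        have h2 : ‖((lam + (k : ℂ) + 1) •
            (1 : Matrix ((ℓ : Fin s) × Fin (n ℓ)) ((ℓ : Fin s) × Fin (n ℓ)) ℂ)
              + jordanDiagC n) a t * (prodL B' (k + 1) t b - Csum n lam k t b)‖
            ≤ (‖lam + (k : ℂ) + 1‖ * (if a = t then 1 else 0)
                + jordanDiagR n a t) * RseqJ n lam R k t b := by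
          rw [norm_mul, abs_scalar_add_jordan]
          refine mul_le_mul_of_nonneg_left (ih t b) ?_
          refine add_nonneg (mul_nonneg (norm_nonneg _) ?_) (hjR a t)
          split_ifs <;> norm_num
        have h3 : ‖(B' (k + 1) a t - ((lam + (k : ℂ) + 1) •
            (1 : Matrix ((ℓ : Fin s) × Fin (n ℓ)) ((ℓ : Fin s) × Fin (n ℓ)) ℂ)
              + jordanDiagC n) a t) * (prodL B' (k + 1) t b - Csum n lam k t b)‖
            ≤ R a t * RseqJ n lam R k t b := by
          rw [norm_mul]
          exact mul_le_mul (hAc a t) (ih t b) (norm_nonneg _) (hR a t)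
        exact add_le_add (add_le_add h1 h2) h3
      refine le_trans (le_trans (norm_sum_le _ _)
        (Finset.sum_le_sum fun t _ => hterm t)) ?_
      rw [Finset.sum_add_distrib, Finset.sum_add_distrib]
      have hS2 : ∑ t, (‖lam + (k : ℂ) + 1‖ * (if a = t then 1 else 0)
            + jordanDiagR n a t) * RseqJ n lam R k t b
          = ‖lam + (k : ℂ) + 1‖ * RseqJ n lam R k a b
            + (jordanDiagR n * RseqJ n lam R k) a b := by
        have hsplit2 : ∀ t : (ℓ : Fin s) × Fin (n ℓ),
            (‖lam + (k : ℂ) + 1‖ * (if a = t then 1 else 0)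
              + jordanDiagR n a t) * RseqJ n lam R k t b
            = (if a = t then ‖lam + (k : ℂ) + 1‖ * RseqJ n lam R k t b else 0)
              + jordanDiagR n a t * RseqJ n lam R k t b := by
          intro t
          split_ifs with h
          · ring
          · ring
        rw [Finset.sum_congr rfl (fun t _ => hsplit2 t), Finset.sum_add_distrib,
          Finset.sum_ite_eq, if_pos (Finset.mem_univ a), Matrix.mul_apply]
      have hS3 : ∑ t, R a t * RseqJ n lam R k t b
          ≤ (colMaxMat R * RseqJ n lam R k) a b := by
        rw [Matrix.mul_apply]
        apply Finset.sum_le_sum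
        intro t _
        have hc : R a t ≤ colMaxMat R a t := by
          rw [colMaxMat, Matrix.of_apply]
          exact le_ciSup (f := fun i => R i t) (Set.Finite.bddAbove (Set.finite_range _)) a
        exact mul_le_mul_of_nonneg_right hc (RseqJ_nonneg hs hn lam R hR k t b)
      have hS1 := sum_mul_absC_le lam k R hR a b
      have hRs : RseqJ n lam R (k + 1) a b = Qmat n lam R k a b
          + ‖lam + (k : ℂ) + 1‖ * RseqJ n lam R k a b
          + (jordanDiagR n * RseqJ n lam R k) a b + (colMaxMat R * RseqJ n lam R k) a b := by
        show (Qmat n lam R k + ‖lam + (k : ℂ) + 1‖ • RseqJ n lam R k +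
          jordanDiagR n * RseqJ n lam R k + colMaxMat R * RseqJ n lam R k) a b = _
        simp only [Matrix.add_apply, Matrix.smul_apply, smul_eq_mul]
      rw [hRs, hS2]
      linarith [hS1, hS3]
  intro a b
  exact key mm (by omega) a b
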